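/- Let S₁, S₂ ⊆ ℕ be finite nonempty disjoint sets. Then z_{S₁ ∪ S₂} ≤ z_{S₁} + z_{S₂} + (1/(2π))·∫₀¹ |g_{S₂}(t)·(deriv g_{S₁} t) − g_{S₁}(t)·(deriv g_{S₂} t)| / (√(g_{S₁}(t)·g_{S₂}(t))·(g_{S₁}(t) + g_{S₂}(t))) dt. -/

import Mathlib

open Real Finset

/-- `g_S(t) = ∑_{e ∈ S} t^(2e)`. -/
noncomputable def gS (S : Finset ℕ) (t : ℝ) : ℝ := ∑ e ∈ S, t ^ (2 * e)

/-- `h_S(t) = ∑_{e ∈ S} e² t^(2e-2)` (the term for `e = 0` being `0`). -/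
noncomputable def hS (S : Finset ℕ) (t : ℝ) : ℝ := ∑ e ∈ S, (e : ℝ) ^ 2 * t ^ (2 * e - 2)

/-- `q_S(t) = ∑_{e ∈ S} e t^(2e-1)` (the term for `e = 0` being `0`). -/
noncomputable def qS (S : Finset ℕ) (t : ℝ) : ℝ := ∑ e ∈ S, (e : ℝ) * t ^ (2 * e - 1)

/-- `E_S(t) = g_S(t) h_S(t) - q_S(t)²`. -/
noncomputable def ES (S : Finset ℕ) (t : ℝ) : ℝ := gS S t * hS S t - qS S t ^ 2

/-- The expected number of real zeros in `(0,1)`, given by the Edelman–Kostlan integral. -/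
noncomputable def zS (S : Finset ℕ) : ℝ :=
  (1 / Real.pi) * ∫ t in (0 : ℝ)..1, Real.sqrt (ES S t) / gS S t

lemma gS_union {S₁ S₂ : Finset ℕ} (h : Disjoint S₁ S₂) (t : ℝ) :
    gS (S₁ ∪ S₂) t = gS S₁ t + gS S₂ t := Finset.sum_union h
lemma hS_union {S₁ S₂ : Finset ℕ} (h : Disjoint S₁ S₂) (t : ℝ) :
    hS (S₁ ∪ S₂) t = hS S₁ t + hS S₂ t := Finset.sum_union h
lemma qS_union {S₁ S₂ : Finset ℕ} (h : Disjoint S₁ S₂) (t : ℝ) :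
    qS (S₁ ∪ S₂) t = qS S₁ t + qS S₂ t := Finset.sum_union h

lemma gS_pos {S : Finset ℕ} (hS : S.Nonempty) {t : ℝ} (ht : 0 < t) : 0 < gS S t :=
  Finset.sum_pos (fun e _ => pow_pos ht _) hS

lemma gS_cont (S : Finset ℕ) : Continuous (gS S) := by
  unfold gS; exact continuous_finset_sum _ (fun e _ => continuous_pow _)
lemma qS_cont (S : Finset ℕ) : Continuous (qS S) := by
  unfold qS; exact continuous_finset_sum _ (fun e _ => (continuous_const).mul (continuous_pow _))
lemma hS_cont (S : Finset ℕ) : Continuous (hS S) := by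
  unfold hS; exact continuous_finset_sum _ (fun e _ => (continuous_const).mul (continuous_pow _))
lemma ES_cont (S : Finset ℕ) : Continuous (ES S) := by
  unfold ES; exact ((gS_cont S).mul (hS_cont S)).sub ((qS_cont S).pow 2)

lemma deriv_gS (S : Finset ℕ) (t : ℝ) : deriv (gS S) t = 2 * qS S t := by
  have h : HasDerivAt (gS S) (∑ e ∈ S, ((2*e : ℕ) : ℝ) * t ^ (2*e - 1)) t := by
    have := HasDerivAt.fun_sum (fun e (_ : e ∈ S) => hasDerivAt_pow (2*e) t)
    exact this
  rw [h.deriv, qS, Finset.mul_sum]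
  refine Finset.sum_congr rfl (fun e _ => ?_)
  push_cast; ring

lemma ES_nonneg (S : Finset ℕ) (t : ℝ) : 0 ≤ ES S t := by
  have key := Finset.sum_mul_sq_le_sq_mul_sq S (fun e => t ^ e) (fun e => (e:ℝ) * t ^ (e-1))
  have h1 : ∑ e ∈ S, t ^ e * ((e:ℝ) * t ^ (e-1)) = qS S t := by
    refine Finset.sum_congr rfl (fun e _ => ?_)
    match e with
    | 0 => simp
    | (n+1) =>
      have h : t^(n+1) * t^(n+1-1) = t^(2*(n+1)-1) := by
        rw [← pow_add]; congr 1; omega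
      calc t^(n+1) * (((n+1:ℕ):ℝ) * t^(n+1-1)) = ((n+1:ℕ):ℝ) * (t^(n+1) * t^(n+1-1)) := by ring
      _ = _ := by rw [h]
  have h2 : ∑ e ∈ S, (t ^ e) ^ 2 = gS S t := by
    refine Finset.sum_congr rfl (fun e _ => ?_)
    rw [← pow_mul]; congr 1; omega
  have h3 : ∑ e ∈ S, ((e:ℝ) * t ^ (e-1)) ^ 2 = hS S t := by
    refine Finset.sum_congr rfl (fun e _ => ?_)
    match e with
    | 0 => simp
    | (n+1) =>
      have h : (t^(n+1-1))^2 = t^(2*(n+1)-2) := by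
        rw [← pow_mul]; congr 1; omega
      calc (((n+1:ℕ):ℝ) * t^(n+1-1)) ^ 2 = ((n+1:ℕ):ℝ)^2 * (t^(n+1-1))^2 := by ring
      _ = _ := by rw [h]
  simp only [h1, h2, h3] at key
  unfold ES; linarith

lemma lagrange (S : Finset ℕ) (x : ℕ → ℝ) :
    (∑ e ∈ S, x e) * (∑ e ∈ S, (e:ℝ)^2 * x e) - (∑ e ∈ S, (e:ℝ) * x e)^2
      = ∑ e ∈ S, ∑ f ∈ S, (((e:ℝ)-f)^2/2) * (x e * x f) := by
  have h1 : ∑ e ∈ S, ∑ f ∈ S, (e:ℝ)^2*(x e * x f)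
      = (∑ e ∈ S, (e:ℝ)^2 * x e) * (∑ e ∈ S, x e) := by
    rw [Finset.sum_mul_sum]
    exact Finset.sum_congr rfl fun e _ => Finset.sum_congr rfl fun f _ => by ring
  have h2 : ∑ e ∈ S, ∑ f ∈ S, (f:ℝ)^2*(x e * x f)
      = (∑ e ∈ S, x e) * (∑ e ∈ S, (e:ℝ)^2 * x e) := by
    rw [Finset.sum_mul_sum]
    exact Finset.sum_congr rfl fun e _ => Finset.sum_congr rfl fun f _ => by ring
  have h3 : ∑ e ∈ S, ∑ f ∈ S, (e:ℝ)*(f:ℝ)*(x e * x f)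
      = (∑ e ∈ S, (e:ℝ) * x e)^2 := by
    rw [sq, Finset.sum_mul_sum]
    exact Finset.sum_congr rfl fun e _ => Finset.sum_congr rfl fun f _ => by ring
  calc (∑ e ∈ S, x e) * (∑ e ∈ S, (e:ℝ)^2 * x e) - (∑ e ∈ S, (e:ℝ) * x e)^2
      = (∑ e ∈ S, ∑ f ∈ S, (e:ℝ)^2*(x e * x f))/2
        + (∑ e ∈ S, ∑ f ∈ S, (f:ℝ)^2*(x e * x f))/2
        - ∑ e ∈ S, ∑ f ∈ S, (e:ℝ)*(f:ℝ)*(x e * x f) := by rw [h1, h2, h3]; ring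
    _ = ∑ e ∈ S, ∑ f ∈ S, (((e:ℝ)-f)^2/2) * (x e * x f) := by
        rw [Finset.sum_div, Finset.sum_div, ← Finset.sum_add_distrib, ← Finset.sum_sub_distrib]
        refine Finset.sum_congr rfl fun e _ => ?_
        rw [Finset.sum_div, Finset.sum_div, ← Finset.sum_add_distrib, ← Finset.sum_sub_distrib]
        exact Finset.sum_congr rfl fun f _ => by ring

lemma t2_ES (S : Finset ℕ) (t : ℝ) :
    t^2 * ES S t = (∑ e ∈ S, t^(2*e)) * (∑ e ∈ S, (e:ℝ)^2 * t^(2*e))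
      - (∑ e ∈ S, (e:ℝ) * t^(2*e))^2 := by
  have hh : t^2 * hS S t = ∑ e ∈ S, (e:ℝ)^2 * t^(2*e) := by
    rw [hS, Finset.mul_sum]
    refine Finset.sum_congr rfl (fun e _ => ?_)
    match e with
    | 0 => simp
    | (n+1) =>
      have h : t^2 * t^(2*(n+1)-2) = t^(2*(n+1)) := by rw [← pow_add]; congr 1; omega
      calc t^2 * (((n+1:ℕ):ℝ)^2 * t^(2*(n+1)-2))
          = ((n+1:ℕ):ℝ)^2 * (t^2 * t^(2*(n+1)-2)) := by ring
        _ = _ := by rw [h]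
  have hq : t * qS S t = ∑ e ∈ S, (e:ℝ) * t^(2*e) := by
    rw [qS, Finset.mul_sum]
    refine Finset.sum_congr rfl (fun e _ => ?_)
    match e with
    | 0 => simp
    | (n+1) =>
      rw [show 2*(n+1)-1 = 2*n+1 from by omega, show 2*(n+1) = (2*n+1)+1 from by omega,
        pow_succ]
      ring
  have : t^2 * ES S t = gS S t * (t^2 * hS S t) - (t * qS S t)^2 := by unfold ES; ring
  rw [this, hh, hq, gS]

lemma ES_le (S : Finset ℕ) (hne : S.Nonempty) {t : ℝ} (ht : 0 < t) (ht1 : t ≤ 1) :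
    ES S t ≤ (∑ e ∈ S, ∑ f ∈ S, ((e:ℝ)-f)^2/2) * t ^ (4 * S.min' hne) := by
  set m := S.min' hne with hm
  have key : t^2 * ES S t ≤ (∑ e ∈ S, ∑ f ∈ S, ((e:ℝ)-f)^2/2) * t ^ (4*m+2) := by
    rw [t2_ES, lagrange]
    rw [Finset.sum_mul]
    refine Finset.sum_le_sum (fun e he => ?_)
    rw [Finset.sum_mul]
    refine Finset.sum_le_sum (fun f hf => ?_)
    rcases eq_or_ne e f with rfl | hef
    · simp
    · have hme : m ≤ e := Finset.min'_le S e he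
      have hmf : m ≤ f := Finset.min'_le S f hf
      have hexp : t^(2*e) * t^(2*f) ≤ t^(4*m+2) := by
        rw [← pow_add]
        exact pow_le_pow_of_le_one ht.le ht1 (by omega)
      exact mul_le_mul_of_nonneg_left hexp (by positivity)
  have h2 : (∑ e ∈ S, ∑ f ∈ S, ((e:ℝ)-f)^2/2) * t ^ (4*m+2)
      = t^2 * ((∑ e ∈ S, ∑ f ∈ S, ((e:ℝ)-f)^2/2) * t ^ (4*m)) := by
    rw [pow_add]; ring
  rw [h2] at key
  exact le_of_mul_le_mul_left key (by positivity)

lemma sqrt_add_le3 {x y : ℝ} (hx : 0 ≤ x) (hy : 0 ≤ y) :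
    Real.sqrt (x + y) ≤ Real.sqrt x + Real.sqrt y := by
  have h : x + y ≤ (Real.sqrt x + Real.sqrt y)^2 := by
    nlinarith [Real.sq_sqrt hx, Real.sq_sqrt hy, Real.sqrt_nonneg x, Real.sqrt_nonneg y]
  calc Real.sqrt (x + y) ≤ Real.sqrt ((Real.sqrt x + Real.sqrt y)^2) := Real.sqrt_le_sqrt h
    _ = _ := Real.sqrt_sq (by positivity)

lemma density_bdd (S : Finset ℕ) (hne : S.Nonempty) {t : ℝ} (ht : 0 < t) (ht1 : t ≤ 1) :
    Real.sqrt (ES S t) / gS S t ≤ Real.sqrt (∑ e ∈ S, ∑ f ∈ S, ((e:ℝ)-f)^2/2) := by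
  set K := ∑ e ∈ S, ∑ f ∈ S, ((e:ℝ)-f)^2/2 with hKdef
  have hK0 : 0 ≤ K := by positivity
  set m := S.min' hne with hm
  have hg : t^(2*m) ≤ gS S t :=
    Finset.single_le_sum (f := fun e => t^(2*e)) (fun e _ => (pow_pos ht (2*e)).le)
      (S.min'_mem hne)
  have hgpos := gS_pos hne ht
  rw [div_le_iff₀ hgpos]
  have h1 : Real.sqrt (ES S t) ≤ Real.sqrt K * t^(2*m) := by
    calc Real.sqrt (ES S t) ≤ Real.sqrt (K * t^(4*m)) := Real.sqrt_le_sqrt (ES_le S hne ht ht1)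
      _ = Real.sqrt K * Real.sqrt (t^(4*m)) := Real.sqrt_mul hK0 _
      _ = Real.sqrt K * t^(2*m) := by
          rw [show 4*m = (2*m)*2 from by ring, pow_mul, Real.sqrt_sq (by positivity)]
  exact h1.trans (mul_le_mul_of_nonneg_left hg (Real.sqrt_nonneg _))

lemma core {a b E e1 e2 q1 q2 : ℝ} (ha : 0 < a) (hb : 0 < b) (he1 : 0 ≤ e1) (he2 : 0 ≤ e2)
    (hE : a * b * E = (q1*b - q2*a)^2 + b*(a+b)*e1 + a*(a+b)*e2) :
    Real.sqrt E / (a+b) ≤ Real.sqrt e1 / a + Real.sqrt e2 / b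
      + 2⁻¹ * (|b*(2*q1) - a*(2*q2)| / (Real.sqrt (a*b) * (a+b))) := by
  set δ := q1*b - q2*a with hδ
  have hab : 0 < a*b := mul_pos ha hb
  have hab2 : 0 < a + b := by linarith
  have hw : 0 < Real.sqrt (a*b) := Real.sqrt_pos.mpr hab
  have hEeq : E = δ^2/(a*b) + b*(a+b)*e1/(a*b) + a*(a+b)*e2/(a*b) := by
    field_simp
    linarith [hE]
  have t1 : Real.sqrt (δ^2/(a*b)) = |δ| / Real.sqrt (a*b) := by
    rw [Real.sqrt_div (sq_nonneg δ), Real.sqrt_sq_eq_abs]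
  have t2 : Real.sqrt (b*(a+b)*e1/(a*b)) ≤ (a+b) * Real.sqrt e1 / a := by
    have h : b*(a+b)*e1/(a*b) ≤ ((a+b) * Real.sqrt e1 / a)^2 := by
      rw [div_pow, mul_pow, Real.sq_sqrt he1, div_le_div_iff₀ hab (by positivity)]
      nlinarith [mul_nonneg (mul_nonneg hb.le hab2.le) (mul_nonneg he1 (mul_nonneg ha.le hb.le))]
    calc Real.sqrt (b*(a+b)*e1/(a*b)) ≤ Real.sqrt (((a+b) * Real.sqrt e1 / a)^2) :=
          Real.sqrt_le_sqrt h
      _ = _ := Real.sqrt_sq (by positivity)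
  have t3 : Real.sqrt (a*(a+b)*e2/(a*b)) ≤ (a+b) * Real.sqrt e2 / b := by
    have h : a*(a+b)*e2/(a*b) ≤ ((a+b) * Real.sqrt e2 / b)^2 := by
      rw [div_pow, mul_pow, Real.sq_sqrt he2, div_le_div_iff₀ hab (by positivity)]
      nlinarith [mul_nonneg (mul_nonneg ha.le hab2.le) (mul_nonneg he2 (mul_nonneg ha.le hb.le))]
    calc Real.sqrt (a*(a+b)*e2/(a*b)) ≤ Real.sqrt (((a+b) * Real.sqrt e2 / b)^2) :=
          Real.sqrt_le_sqrt h
      _ = _ := Real.sqrt_sq (by positivity)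
  have main : Real.sqrt E ≤ |δ| / Real.sqrt (a*b) + (a+b)*Real.sqrt e1/a + (a+b)*Real.sqrt e2/b := by
    calc Real.sqrt E
        = Real.sqrt (δ^2/(a*b) + b*(a+b)*e1/(a*b) + a*(a+b)*e2/(a*b)) := by rw [← hEeq]
      _ ≤ Real.sqrt (δ^2/(a*b) + b*(a+b)*e1/(a*b)) + Real.sqrt (a*(a+b)*e2/(a*b)) :=
          sqrt_add_le3 (by positivity) (by positivity)
      _ ≤ Real.sqrt (δ^2/(a*b)) + Real.sqrt (b*(a+b)*e1/(a*b)) + Real.sqrt (a*(a+b)*e2/(a*b)) := by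
          have := sqrt_add_le3 (x := δ^2/(a*b)) (y := b*(a+b)*e1/(a*b)) (by positivity) (by positivity)
          linarith
      _ ≤ _ := by rw [t1]; linarith
  have habs : |b*(2*q1) - a*(2*q2)| = 2 * |δ| := by
    rw [show b*(2*q1) - a*(2*q2) = 2*(q1*b - q2*a) from by ring, abs_mul, ← hδ]
    norm_num
  rw [habs]
  have step : Real.sqrt E / (a+b)
      ≤ (|δ| / Real.sqrt (a*b) + (a+b)*Real.sqrt e1/a + (a+b)*Real.sqrt e2/b) / (a+b) :=
    (div_le_div_iff_of_pos_right hab2).mpr main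
  calc Real.sqrt E / (a+b)
      ≤ (|δ| / Real.sqrt (a*b) + (a+b)*Real.sqrt e1/a + (a+b)*Real.sqrt e2/b) / (a+b) := step
    _ = Real.sqrt e1 / a + Real.sqrt e2 / b + 2⁻¹ * (2*|δ| / (Real.sqrt (a*b) * (a+b))) := by
        field_simp
        ring

noncomputable def CS (S : Finset ℕ) : ℝ := Real.sqrt (∑ e ∈ S, ∑ f ∈ S, ((e:ℝ)-f)^2/2)

lemma identity (S₁ S₂ : Finset ℕ) (hdisj : Disjoint S₁ S₂) (t : ℝ) :
    gS S₁ t * gS S₂ t * ES (S₁ ∪ S₂) t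
      = (qS S₁ t * gS S₂ t - qS S₂ t * gS S₁ t)^2
        + gS S₂ t * (gS S₁ t + gS S₂ t) * ES S₁ t
        + gS S₁ t * (gS S₁ t + gS S₂ t) * ES S₂ t := by
  simp only [ES, gS_union hdisj, hS_union hdisj, qS_union hdisj]
  ring

lemma pointwise (S₁ S₂ : Finset ℕ) (h₁ : S₁.Nonempty) (h₂ : S₂.Nonempty)
    (hdisj : Disjoint S₁ S₂) {t : ℝ} (ht : 0 < t) :
    Real.sqrt (ES (S₁ ∪ S₂) t) / gS (S₁ ∪ S₂) t
      ≤ Real.sqrt (ES S₁ t) / gS S₁ t + Real.sqrt (ES S₂ t) / gS S₂ t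
        + 2⁻¹ * (|gS S₂ t * (2 * qS S₁ t) - gS S₁ t * (2 * qS S₂ t)|
            / (Real.sqrt (gS S₁ t * gS S₂ t) * (gS S₁ t + gS S₂ t))) := by
  have ha := gS_pos h₁ ht
  have hb := gS_pos h₂ ht
  rw [gS_union hdisj]
  have hE : gS S₁ t * gS S₂ t * ES (S₁ ∪ S₂) t
      = (qS S₁ t * gS S₂ t - qS S₂ t * gS S₁ t)^2
        + gS S₂ t * (gS S₁ t + gS S₂ t) * ES S₁ t
        + gS S₁ t * (gS S₁ t + gS S₂ t) * ES S₂ t := identity S₁ S₂ hdisj t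
  exact core ha hb (ES_nonneg S₁ t) (ES_nonneg S₂ t) hE

lemma D_le (S₁ S₂ : Finset ℕ) (h₁ : S₁.Nonempty) (h₂ : S₂.Nonempty)
    (hdisj : Disjoint S₁ S₂) {t : ℝ} (ht : 0 < t) :
    |gS S₂ t * (2 * qS S₁ t) - gS S₁ t * (2 * qS S₂ t)|
        / (Real.sqrt (gS S₁ t * gS S₂ t) * (gS S₁ t + gS S₂ t))
      ≤ 2 * (Real.sqrt (ES (S₁ ∪ S₂) t) / gS (S₁ ∪ S₂) t) := by
  have ha := gS_pos h₁ ht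
  have hb := gS_pos h₂ ht
  have hab : (0:ℝ) < gS S₁ t * gS S₂ t := mul_pos ha hb
  have hw : 0 < Real.sqrt (gS S₁ t * gS S₂ t) := Real.sqrt_pos.mpr hab
  have hE := identity S₁ S₂ hdisj t
  set δ := qS S₁ t * gS S₂ t - qS S₂ t * gS S₁ t with hδdef
  have hδ2 : δ^2 ≤ gS S₁ t * gS S₂ t * ES (S₁ ∪ S₂) t := by
    nlinarith [ES_nonneg S₁ t, ES_nonneg S₂ t,
      mul_nonneg (mul_nonneg hb.le (by linarith : (0:ℝ) ≤ gS S₁ t + gS S₂ t)) (ES_nonneg S₁ t),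
      mul_nonneg (mul_nonneg ha.le (by linarith : (0:ℝ) ≤ gS S₁ t + gS S₂ t)) (ES_nonneg S₂ t)]
  have hEU : 0 ≤ ES (S₁ ∪ S₂) t := ES_nonneg _ t
  have hδ : |δ| ≤ Real.sqrt (gS S₁ t * gS S₂ t) * Real.sqrt (ES (S₁ ∪ S₂) t) := by
    have h := Real.sqrt_le_sqrt hδ2
    rwa [Real.sqrt_sq_eq_abs, Real.sqrt_mul hab.le] at h
  have habs : |gS S₂ t * (2 * qS S₁ t) - gS S₁ t * (2 * qS S₂ t)| = 2 * |δ| := by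
    rw [show gS S₂ t * (2 * qS S₁ t) - gS S₁ t * (2 * qS S₂ t)
          = 2*(qS S₁ t * gS S₂ t - qS S₂ t * gS S₁ t) from by ring, abs_mul, ← hδdef]
    norm_num
  rw [habs, gS_union hdisj]
  rw [div_le_iff₀ (by positivity)]
  have key : 2 * (Real.sqrt (ES (S₁ ∪ S₂) t) / (gS S₁ t + gS S₂ t))
      * (Real.sqrt (gS S₁ t * gS S₂ t) * (gS S₁ t + gS S₂ t))
      = 2 * (Real.sqrt (gS S₁ t * gS S₂ t) * Real.sqrt (ES (S₁ ∪ S₂) t)) := by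
    field_simp
  rw [key]
  linarith

lemma intg {F : ℝ → ℝ} (hmeas : Measurable F) {C : ℝ}
    (hbdd : ∀ t ∈ Set.Ioc (0:ℝ) 1, |F t| ≤ C) : IntervalIntegrable F MeasureTheory.volume 0 1 := by
  rw [intervalIntegrable_iff, Set.uIoc_of_le zero_le_one]
  apply MeasureTheory.Measure.integrableOn_of_bounded (M := C)
  · exact measure_Ioc_lt_top.ne
  · exact hmeas.aestronglyMeasurable
  · rw [MeasureTheory.ae_restrict_iff' measurableSet_Ioc]
    exact MeasureTheory.ae_of_all _ (fun t ht => by simpa [Real.norm_eq_abs] using hbdd t ht)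

lemma density_meas (S : Finset ℕ) :
    Measurable (fun t => Real.sqrt (ES S t) / gS S t) :=
  (Real.continuous_sqrt.comp (ES_cont S)).measurable.div (gS_cont S).measurable

lemma density_intg (S : Finset ℕ) (hne : S.Nonempty) :
    IntervalIntegrable (fun t => Real.sqrt (ES S t) / gS S t) MeasureTheory.volume 0 1 := by
  apply intg (density_meas S) (C := CS S)
  intro t ht
  have h0 : 0 ≤ Real.sqrt (ES S t) / gS S t :=
    div_nonneg (Real.sqrt_nonneg _) (gS_pos hne ht.1).le
  rw [abs_of_nonneg h0]
  exact density_bdd S hne ht.1 ht.2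

lemma D_intg (S₁ S₂ : Finset ℕ) (h₁ : S₁.Nonempty) (h₂ : S₂.Nonempty)
    (hdisj : Disjoint S₁ S₂) :
    IntervalIntegrable (fun t => |gS S₂ t * (2 * qS S₁ t) - gS S₁ t * (2 * qS S₂ t)|
        / (Real.sqrt (gS S₁ t * gS S₂ t) * (gS S₁ t + gS S₂ t))) MeasureTheory.volume 0 1 := by
  apply intg (C := 2 * CS (S₁ ∪ S₂))
  · apply Measurable.div
    · exact (((gS_cont S₂).mul ((continuous_const).mul (qS_cont S₁))).sub
        ((gS_cont S₁).mul ((continuous_const).mul (qS_cont S₂)))).abs.measurable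
    · exact ((Real.continuous_sqrt.comp ((gS_cont S₁).mul (gS_cont S₂))).mul
        ((gS_cont S₁).add (gS_cont S₂))).measurable
  · intro t ht
    have hpos : 0 < Real.sqrt (gS S₁ t * gS S₂ t) * (gS S₁ t + gS S₂ t) := by
      have ha := gS_pos h₁ ht.1; have hb := gS_pos h₂ ht.1
      positivity
    have h0 : 0 ≤ |gS S₂ t * (2 * qS S₁ t) - gS S₁ t * (2 * qS S₂ t)|
        / (Real.sqrt (gS S₁ t * gS S₂ t) * (gS S₁ t + gS S₂ t)) :=
      div_nonneg (abs_nonneg _) hpos.le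
    rw [abs_of_nonneg h0]
    calc _ ≤ 2 * (Real.sqrt (ES (S₁ ∪ S₂) t) / gS (S₁ ∪ S₂) t) :=
          D_le S₁ S₂ h₁ h₂ hdisj ht.1
      _ ≤ 2 * CS (S₁ ∪ S₂) := by
          have := density_bdd (S₁ ∪ S₂) (h₁.mono Finset.subset_union_left) ht.1 ht.2
          unfold CS
          linarith

theorem stmt18 (S₁ S₂ : Finset ℕ) (h₁ : S₁.Nonempty) (h₂ : S₂.Nonempty)
    (hdisj : Disjoint S₁ S₂) :
    zS (S₁ ∪ S₂) ≤ zS S₁ + zS S₂ +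
      (1 / (2 * Real.pi)) *
        ∫ t in (0 : ℝ)..1,
          |gS S₂ t * deriv (gS S₁) t - gS S₁ t * deriv (gS S₂) t| /
            (Real.sqrt (gS S₁ t * gS S₂ t) * (gS S₁ t + gS S₂ t)) := by
  have hpi : (0:ℝ) < Real.pi := Real.pi_pos
  have hder : ∀ t : ℝ, |gS S₂ t * deriv (gS S₁) t - gS S₁ t * deriv (gS S₂) t| /
            (Real.sqrt (gS S₁ t * gS S₂ t) * (gS S₁ t + gS S₂ t))
      = |gS S₂ t * (2 * qS S₁ t) - gS S₁ t * (2 * qS S₂ t)| /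
            (Real.sqrt (gS S₁ t * gS S₂ t) * (gS S₁ t + gS S₂ t)) := by
    intro t; rw [deriv_gS, deriv_gS]
  simp only [zS, hder]
  have hI1 := density_intg S₁ h₁
  have hI2 := density_intg S₂ h₂
  have hIU := density_intg (S₁ ∪ S₂) (h₁.mono Finset.subset_union_left)
  have hID := D_intg S₁ S₂ h₁ h₂ hdisj
  set F1 := fun t => Real.sqrt (ES S₁ t) / gS S₁ t with hF1
  set F2 := fun t => Real.sqrt (ES S₂ t) / gS S₂ t with hF2
  set FU := fun t => Real.sqrt (ES (S₁ ∪ S₂) t) / gS (S₁ ∪ S₂) t with hFU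
  set D := fun t => |gS S₂ t * (2 * qS S₁ t) - gS S₁ t * (2 * qS S₂ t)| /
            (Real.sqrt (gS S₁ t * gS S₂ t) * (gS S₁ t + gS S₂ t)) with hD
  have hle : (∫ t in (0:ℝ)..1, FU t) ≤ ∫ t in (0:ℝ)..1, (F1 t + F2 t + 2⁻¹ * D t) := by
    rw [intervalIntegral.integral_of_le zero_le_one, intervalIntegral.integral_of_le zero_le_one]
    apply MeasureTheory.setIntegral_mono_on
    · rw [intervalIntegrable_iff, Set.uIoc_of_le zero_le_one] at hIU
      exact hIU
    · have h := (hI1.add hI2).add (hID.const_mul 2⁻¹)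
      rw [intervalIntegrable_iff, Set.uIoc_of_le zero_le_one] at h
      exact h
    · exact measurableSet_Ioc
    · intro t ht
      exact pointwise S₁ S₂ h₁ h₂ hdisj ht.1
  have hsplit : (∫ t in (0:ℝ)..1, (F1 t + F2 t + 2⁻¹ * D t))
      = (∫ t in (0:ℝ)..1, F1 t) + (∫ t in (0:ℝ)..1, F2 t) + 2⁻¹ * ∫ t in (0:ℝ)..1, D t := by
    rw [intervalIntegral.integral_add (hI1.add hI2) (hID.const_mul 2⁻¹),
      intervalIntegral.integral_add hI1 hI2, intervalIntegral.integral_const_mul]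
  have hmul := mul_le_mul_of_nonneg_left (hle.trans_eq hsplit)
    (by positivity : (0:ℝ) ≤ 1 / Real.pi)
  have hscal : (1 / Real.pi) * ((∫ t in (0:ℝ)..1, F1 t) + (∫ t in (0:ℝ)..1, F2 t)
        + 2⁻¹ * ∫ t in (0:ℝ)..1, D t)
      = (1 / Real.pi) * (∫ t in (0:ℝ)..1, F1 t) + (1 / Real.pi) * (∫ t in (0:ℝ)..1, F2 t)
        + (1 / (2 * Real.pi)) * ∫ t in (0:ℝ)..1, D t := by
    field_simp
  linarith
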